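/- Let X ⊆ {0,1}^{Z+} be the even shift, i.e. the one-sided shift space with forbidden words {1 0^{2n+1} 1 : n ≥ 0}. Then X is topologically mixing, but the hom tree-shift T_X is not CPC-irreducible (hence not irreducible). -/

import Mathlib

namespace TreeShiftPaper

/-- Words over the alphabet `Σ = {0, …, k-1}`: nodes of the `k`-tree. -/
abbrev Word (k : ℕ) := List (Fin k)

variable {k : ℕ} {A : Type*}

/-- A set of words is prefix-closed if it contains every prefix of each of its elements. -/
def PrefixClosed (S : Set (Word k)) : Prop :=
  ∀ w ∈ S, ∀ v : Word k, v <+: w → v ∈ S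

/-- The pattern with support `S` and labels `u` appears in the labeled tree `t`. -/
def PatternAppears (t : Word k → A) (S : Set (Word k)) (u : Word k → A) : Prop :=
  ∃ s : Word k, ∀ w ∈ S, t (s ++ w) = u w

/-- The set of labeled trees avoiding every pattern of the forbidden family `F`. -/
def treeShiftOf (F : Set ((Set (Word k)) × (Word k → A))) : Set (Word k → A) :=
  {t | ∀ p ∈ F, ¬ PatternAppears t p.1 p.2}

/-- `T` is a tree-shift: it is defined by some forbidden set of patterns
(each with finite prefix-closed support). -/
def IsTreeShift (T : Set (Word k → A)) : Prop :=
  ∃ F : Set ((Set (Word k)) × (Word k → A)),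
    (∀ p ∈ F, p.1.Finite ∧ PrefixClosed p.1) ∧ T = treeShiftOf F

/-- `T` is a tree-shift of finite type: the forbidden set can be chosen finite. -/
def IsTreeSFT (T : Set (Word k → A)) : Prop :=
  ∃ F : Set ((Set (Word k)) × (Word k → A)),
    F.Finite ∧ (∀ p ∈ F, p.1.Finite ∧ PrefixClosed p.1) ∧ T = treeShiftOf F

/-- The finite word `w` occurs in the one-sided sequence `x` at position `i`. -/
def OccursAt (x : ℕ → A) (i : ℕ) (w : List A) : Prop :=
  ∀ j : Fin w.length, x (i + (j : ℕ)) = w.get j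

/-- The one-sided shift space defined by the forbidden set of words `F`. -/
def shiftOf (F : Set (List A)) : Set (ℕ → A) :=
  {x | ∀ w ∈ F, ∀ i : ℕ, ¬ OccursAt x i w}

/-- `X` is a one-sided shift space. -/
def IsShift (X : Set (ℕ → A)) : Prop := ∃ F : Set (List A), X = shiftOf F

/-- `X` is a one-sided shift of finite type. -/
def IsSFT (X : Set (ℕ → A)) : Prop :=
  ∃ F : Set (List A), F.Finite ∧ X = shiftOf F

/-- A chain: an infinite path in the tree starting at the root. -/
def IsChain (c : ℕ → Word k) : Prop :=
  c 0 = [] ∧ ∀ n : ℕ, ∃ i : Fin k, c (n + 1) = c n ++ [i]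

/-- The hom tree-shift associated with a one-sided shift space `X`: labeled trees whose
projection along every chain lies in `X`. -/
def homTree (k : ℕ) (X : Set (ℕ → A)) : Set (Word k → A) :=
  {t | ∀ c : ℕ → Word k, IsChain c → (fun n => t (c n)) ∈ X}

/-- `Y` is a sofic one-sided shift: image of an SFT under a sliding block code induced
by an `n`-block map. -/
def IsSofic (Y : Set (ℕ → A)) : Prop :=
  ∃ (B : Type) (_ : Fintype B) (X : Set (ℕ → B)) (n : ℕ) (f : (ℕ → B) → A),
    IsSFT X ∧ (∀ u v : ℕ → B, (∀ j < n, u j = v j) → f u = f v) ∧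
    (fun x : ℕ → B => fun i => f (fun j => x (i + j))) '' X = Y

/-- `T` is a sofic tree-shift: image of a tree-SFT under the map induced by an
`n`-block map. -/
def IsSoficTree (T : Set (Word k → A)) : Prop :=
  ∃ (B : Type) (_ : Fintype B) (T' : Set (Word k → B)) (n : ℕ) (g : (Word k → B) → A),
    IsTreeSFT T' ∧
    (∀ u v : Word k → B, (∀ w : Word k, w.length ≤ n → u w = v w) → g u = g v) ∧
    (fun t : Word k → B => fun w => g (fun z => t (w ++ z))) '' T' = T

/-- The Markov tree-shift determined by `k` binary `d × d` transition matrices. -/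
def markovTree (k d : ℕ) (M : Fin k → Matrix (Fin d) (Fin d) Bool) :
    Set (Word k → Fin d) :=
  {t | ∀ w : Word k, ∀ i : Fin k, M i (t w) (t (w ++ [i])) = true}

/-- The one-sided Markov (vertex) shift determined by a binary `d × d` matrix. -/
def markovShift (d : ℕ) (M : Matrix (Fin d) (Fin d) Bool) : Set (ℕ → Fin d) :=
  {x | ∀ i : ℕ, M (x i) (x (i + 1)) = true}

/-- The pattern with support `S` and labels `u` is admissible in `T`. -/
def AdmissiblePattern (T : Set (Word k → A)) (S : Set (Word k)) (u : Word k → A) : Prop :=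
  ∃ t ∈ T, ∃ s : Word k, ∀ w ∈ S, t (s ++ w) = u w

/-- The `n`-block `u` (a labeling of `Δ_n`) is admissible in `T`. -/
def AdmissibleBlock (T : Set (Word k → A)) (n : ℕ) (u : Word k → A) : Prop :=
  ∃ t ∈ T, ∃ s : Word k, ∀ w : Word k, w.length ≤ n → t (s ++ w) = u w

/-- Word distance on the `k`-tree:
`d(x,y) = |x| + |y| - 2 · max{|w| : w` a common prefix of `x` and `y}`. -/
noncomputable def wordDist (x y : Word k) : ℕ :=
  x.length + y.length - 2 * sSup {m : ℕ | ∃ w : Word k, w <+: x ∧ w <+: y ∧ w.length = m}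

/-- The boundary `∂S = {w ∈ S : wΣ ∩ S = ∅}` of a support `S`. -/
def boundary (S : Set (Word k)) : Set (Word k) :=
  {w | w ∈ S ∧ ∀ i : Fin k, w ++ [i] ∉ S}

/-- A complete prefix code: a finite prefix set such that every word of length at least
`max_{z ∈ P} |z|` has a prefix in `P`. -/
def IsCPC (P : Set (Word k)) : Prop :=
  P.Finite ∧ (∀ x ∈ P, ∀ y ∈ P, x <+: y → x = y) ∧
  ∀ w : Word k, (∀ z ∈ P, z.length ≤ w.length) → ∃ x ∈ P, x <+: w

/-- Strong irreducibility with gap `N`. -/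
def SIGap (T : Set (Word k → A)) (N : ℕ) : Prop :=
  ∀ (Su Sv : Set (Word k)) (u v : Word k → A),
    Su.Finite → PrefixClosed Su → Sv.Finite → PrefixClosed Sv →
    AdmissiblePattern T Su u → AdmissiblePattern T Sv v →
    ∀ w : Word k, (∀ h ∈ Su, N ≤ wordDist w h) →
      ∃ t ∈ T, (∀ z ∈ Su, t z = u z) ∧ ∀ z ∈ Sv, t (w ++ z) = v z

/-- `T` is strongly irreducible (SI). -/
def SI (T : Set (Word k → A)) : Prop := ∃ N : ℕ, SIGap T N

/-- `T` is block gluing (BG). -/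
def BG (T : Set (Word k → A)) : Prop :=
  ∃ N : ℕ, ∀ (n m : ℕ) (u v : Word k → A),
    AdmissibleBlock T n u → AdmissibleBlock T m v →
    ∀ w : Word k, N + n ≤ w.length →
      ∃ t ∈ T, (∀ z : Word k, z.length ≤ n → t z = u z) ∧
        ∀ z : Word k, z.length ≤ m → t (w ++ z) = v z

/-- `T` is topologically mixing (TM). -/
def TM (T : Set (Word k → A)) : Prop :=
  ∀ H₁ H₂ : Set (Word k), H₁.Finite → H₂.Finite →
    ∃ N : ℕ, ∀ t₁ ∈ T, ∀ t₂ ∈ T, ∀ w : Word k, (∀ h ∈ H₁, N ≤ wordDist w h) →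
      ∃ t ∈ T, (∀ z ∈ H₁, t z = t₁ z) ∧ ∀ z ∈ H₂, t (w ++ z) = t₂ z

/-- `T` is irreducible (IR). -/
def IR (T : Set (Word k → A)) : Prop :=
  ∀ (n m : ℕ) (u v : Word k → A),
    AdmissibleBlock T n u → AdmissibleBlock T m v →
    ∃ w : Word k, n < w.length ∧
      ∃ t ∈ T, (∀ z : Word k, z.length ≤ n → t z = u z) ∧
        ∀ z : Word k, z.length ≤ m → t (w ++ z) = v z

/-- `T` is CPC-strongly irreducible via the prefix set `P`. -/
def CPCSIWith (T : Set (Word k → A)) (P : Set (Word k)) : Prop :=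
  ∀ (Su Sv : Set (Word k)) (u v : Word k → A),
    Su.Finite → PrefixClosed Su → Sv.Finite → PrefixClosed Sv →
    AdmissiblePattern T Su u → AdmissiblePattern T Sv v →
    ∃ t ∈ T, (∀ z ∈ Su, t z = u z) ∧
      ∀ w ∈ boundary Su, ∀ z ∈ P, ∀ y ∈ Sv, t (w ++ z ++ y) = v y

/-- `T` is CPC-strongly irreducible (CPC SI). -/
def CPCSI (T : Set (Word k → A)) : Prop := ∃ P : Set (Word k), IsCPC P ∧ CPCSIWith T P

/-- `T` is uniform CPC-strongly irreducible (CPC USI): CPC SI with `P = Σ^N`. -/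
def CPCUSI (T : Set (Word k → A)) : Prop :=
  ∃ N : ℕ, CPCSIWith T {z : Word k | z.length = N}

/-- `T` is CPC-block gluing via the prefix set `P`. -/
def CPCBGWith (T : Set (Word k → A)) (P : Set (Word k)) : Prop :=
  ∀ (n m : ℕ) (u v : Word k → A),
    AdmissibleBlock T n u → AdmissibleBlock T m v →
    ∃ t ∈ T, (∀ z : Word k, z.length ≤ n → t z = u z) ∧
      ∀ w : Word k, w.length = n → ∀ z ∈ P, ∀ y : Word k, y.length ≤ m →
        t (w ++ z ++ y) = v y

/-- `T` is CPC-block gluing (CPC BG). -/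
def CPCBG (T : Set (Word k → A)) : Prop := ∃ P : Set (Word k), IsCPC P ∧ CPCBGWith T P

/-- `T` is uniform CPC-block gluing (CPC UBG): CPC BG with `P = Σ^N`. -/
def CPCUBG (T : Set (Word k → A)) : Prop :=
  ∃ N : ℕ, CPCBGWith T {z : Word k | z.length = N}

/-- `T` is CPC-irreducible (CPC IR). -/
def CPCIR (T : Set (Word k → A)) : Prop :=
  ∀ (n m : ℕ) (u v : Word k → A),
    AdmissibleBlock T n u → AdmissibleBlock T m v →
    ∃ P : Set (Word k), IsCPC P ∧ (∀ z ∈ P, n + 1 ≤ z.length) ∧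
      ∃ t ∈ T, (∀ z : Word k, z.length ≤ n → t z = u z) ∧
        ∀ w ∈ P, ∀ y : Word k, y.length ≤ m → t (w ++ y) = v y

/-- The finite word `u` is admissible in the one-sided shift space `X`. -/
def WordAdmissible (X : Set (ℕ → A)) (u : List A) : Prop :=
  ∃ x ∈ X, ∃ i : ℕ, OccursAt x i u

/-- The one-sided shift space `X` is topologically mixing. -/
def MixingShift (X : Set (ℕ → A)) : Prop :=
  ∀ u v : List A, WordAdmissible X u → WordAdmissible X v →
    ∃ N : ℕ, ∀ n ≥ N, ∃ x ∈ X, OccursAt x 0 u ∧ OccursAt x (u.length + n) v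

/-- The one-sided shift space `X` is transitive (irreducible). -/
def TransitiveShift (X : Set (ℕ → A)) : Prop :=
  ∀ u v : List A, WordAdmissible X u → WordAdmissible X v →
    ∃ x ∈ X, ∃ n : ℕ, u.length ≤ n ∧ OccursAt x 0 u ∧ OccursAt x n v

end TreeShiftPaper

namespace TreeShiftPaper

/-- The (one-sided) even shift: no word `1 0^{2n+1} 1` occurs. -/
def evenShift : Set (ℕ → Fin 2) :=
  shiftOf {w : List (Fin 2) | ∃ n : ℕ, w = 1 :: (List.replicate (2 * n + 1) 0 ++ [1])}

lemma occurs_forbidden_iff (x : ℕ → Fin 2) (i n : ℕ) :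
    OccursAt x i (1 :: (List.replicate (2 * n + 1) (0 : Fin 2) ++ [1])) ↔
      (x i = 1 ∧ (∀ j, 0 < j → j ≤ 2 * n + 1 → x (i + j) = 0) ∧ x (i + (2 * n + 2)) = 1) := by
  have hlen : (1 :: (List.replicate (2 * n + 1) (0 : Fin 2) ++ [1])).length = 2 * n + 3 := by
    simp
  have hget : ∀ (j : ℕ) (hj : j < 2 * n + 3),
      (1 :: (List.replicate (2 * n + 1) (0 : Fin 2) ++ [1])).get ⟨j, by omega⟩ =
        if j = 0 then 1 else if j ≤ 2 * n + 1 then 0 else 1 := by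
    intro j hj
    rcases j with _ | j'
    · simp
    · simp only [List.get_eq_getElem, List.getElem_cons_succ]
      by_cases h : j' < 2 * n + 1
      · rw [List.getElem_append_left (by simpa using h)]
        rw [List.getElem_replicate, if_neg (by omega), if_pos (by omega)]
      · have hj' : j' = 2 * n + 1 := by omega
        subst hj'
        rw [List.getElem_append_right (by simp)]
        simp
  constructor
  · intro h
    refine ⟨?_, ?_, ?_⟩
    · have := h ⟨0, by omega⟩
      rw [hget 0 (by omega)] at this
      simpa using this
    · intro j hj1 hj2
      have := h ⟨j, by omega⟩
      rw [hget j (by omega)] at this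
      simp only [if_neg (by omega : ¬ j = 0), if_pos hj2] at this
      exact this
    · have := h ⟨2 * n + 2, by omega⟩
      rw [hget (2*n+2) (by omega)] at this
      simpa using this
  · rintro ⟨h1, h2, h3⟩ ⟨j, hj⟩
    rw [hlen] at hj
    rw [hget j hj]
    rcases Nat.eq_zero_or_pos j with h | h
    · subst h; simpa using h1
    · by_cases h' : j ≤ 2 * n + 1
      · simp only [if_neg (by omega : ¬ j = 0), if_pos h']
        exact h2 j h h'
      · have : j = 2 * n + 2 := by omega
        subst this
        simpa using h3

lemma mem_evenShift_iff (x : ℕ → Fin 2) :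
    x ∈ evenShift ↔
      ∀ i l : ℕ, x i = 1 → (∀ j, 0 < j → j ≤ l → x (i + j) = 0) → x (i + l + 1) = 1 →
        Even l := by
  constructor
  · intro h i l h1 h2 h3
    by_contra hodd
    obtain ⟨n, rfl⟩ : ∃ n, l = 2 * n + 1 :=
      ⟨l / 2, by have := Nat.not_even_iff.mp hodd; omega⟩
    refine h _ ⟨n, rfl⟩ i ?_
    rw [occurs_forbidden_iff]
    refine ⟨h1, h2, ?_⟩
    have : i + (2 * n + 2) = i + (2 * n + 1) + 1 := by omega
    rw [this]; exact h3
  · rintro h w ⟨n, rfl⟩ i hocc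
    rw [occurs_forbidden_iff] at hocc
    obtain ⟨h1, h2, h3⟩ := hocc
    have he := h i (2 * n + 1) h1 h2 (by rw [show i + (2*n+1) + 1 = i + (2*n+2) by omega]; exact h3)
    have := Nat.even_iff.mp he
    omega

lemma evenShift_mixing : MixingShift evenShift := by
  classical
  intro u v hu hv
  obtain ⟨xu, hxu, iu, hou⟩ := hu
  obtain ⟨xv, hxv, iv, hov⟩ := hv
  have Hu := (mem_evenShift_iff xu).mp hxu
  have Hv := (mem_evenShift_iff xv).mp hxv
  refine ⟨3, ?_⟩
  intro n hn
  set a : ℕ → Fin 2 := fun j => xu (iu + j) with ha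
  set b : ℕ → Fin 2 := fun j => xv (iv + j) with hb
  set L := u.length with hL
  set α : ℕ := if h : ∃ j, a j = 1 ∧ j < L
    then (L - 1 - Nat.findGreatest (fun j => a j = 1 ∧ j < L) L) % 2 else 0 with hα
  set β : ℕ := if h : ∃ j, b j = 1 then (Nat.find h) % 2 else 0 with hβ
  have hα1 : α ≤ 1 := by rw [hα]; split <;> omega
  have hβ1 : β ≤ 1 := by rw [hβ]; split <;> omega
  set M := L + n - β with hM
  set R := L + n with hR
  have hLM : L + α < M := by omega
  obtain ⟨z, hz⟩ : ∃ z : ℕ → Fin 2, z = fun j =>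
      if j < L + α then (if j < L then a j else 0)
      else if j < M then (1 : Fin 2) else if j < R then 0 else b (j - R) := ⟨_, rfl⟩
  have z1 : ∀ j, j < L → z j = a j := by
    intro j hj; rw [hz]; simp only
    rw [if_pos (by omega), if_pos hj]
  have z2 : ∀ j, L ≤ j → j < L + α → z j = 0 := by
    intro j hj hj'; rw [hz]; simp only
    rw [if_pos hj', if_neg (by omega)]
  have z3 : ∀ j, L + α ≤ j → j < M → z j = 1 := by
    intro j hj hj'; rw [hz]; simp only
    rw [if_neg (by omega), if_pos hj']
  have z4 : ∀ j, M ≤ j → j < R → z j = 0 := by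
    intro j hj hj'; rw [hz]; simp only
    rw [if_neg (by omega), if_neg (by omega), if_pos hj']
  have z5 : ∀ j, R ≤ j → z j = b (j - R) := by
    intro j hj; rw [hz]; simp only
    rw [if_neg (by omega), if_neg (by omega), if_neg (by omega)]
  refine ⟨z, ?_, ?_, ?_⟩
  · -- z ∈ evenShift
    rw [mem_evenShift_iff]
    intro i l h1 h2 h3
    rcases lt_or_ge (i + l + 1) L with heL | heL
    · -- both inside u
      have hiL : i < L := by omega
      rw [z1 i hiL] at h1
      rw [z1 _ heL] at h3
      refine Hu (iu + i) l h1 ?_ ?_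
      · intro j hj0 hjl
        have := h2 j hj0 hjl
        rw [z1 (i + j) (by omega)] at this
        show xu (iu + i + j) = 0
        rw [Nat.add_assoc]
        exact this
      · show xu (iu + i + l + 1) = 1
        rw [show iu + i + l + 1 = iu + (i + l + 1) by omega]
        exact h3
    · rcases lt_or_ge (i + l + 1) (L + α) with heα | heα
      · rw [z2 _ heL heα] at h3
        exact absurd h3 (by decide)
      · rcases lt_or_ge (i + l + 1) M with heM | heM
        · -- end in 1-block
          rcases lt_or_ge i (L + α) with hiα | hiα
          · have hiL : i < L := by
              by_contra hc
              rw [z2 i (by omega) (by omega)] at h1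
              exact absurd h1 (by decide)
            have heq : i + l + 1 = L + α := by
              by_contra hc
              have ht1 : z (L + α) = 1 := z3 _ le_rfl (by omega)
              have ht0 : z (L + α) = 0 := by
                have := h2 (L + α - i) (by omega) (by omega)
                rw [show i + (L + α - i) = L + α by omega] at this; exact this
              rw [ht0] at ht1; exact absurd ht1 (by decide)
            rw [z1 i hiL] at h1
            have hex : ∃ j, a j = 1 ∧ j < L := ⟨i, h1, hiL⟩
            have hα' : α = (L - 1 - Nat.findGreatest (fun j => a j = 1 ∧ j < L) L) % 2 := by
              rw [hα, dif_pos hex]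
            set p := Nat.findGreatest (fun j => a j = 1 ∧ j < L) L with hp
            have hple : p ≤ L := Nat.findGreatest_le L
            have hpspec : a p = 1 ∧ p < L := by
              have := Nat.findGreatest_spec (P := fun j => a j = 1 ∧ j < L)
                (m := i) (n := L) (by omega) ⟨h1, hiL⟩
              rw [← hp] at this
              exact this
            have hip : i ≤ p := by
              by_contra hc
              have := Nat.findGreatest_is_greatest (P := fun j => a j = 1 ∧ j < L)
                (n := L) (k := i) (by omega) (by omega)
              exact this ⟨h1, hiL⟩
            have hpi : p = i := by
              rcases Nat.lt_or_ge i p with hlt | hge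
              · have h0 : z p = 0 := by
                  have := h2 (p - i) (by omega) (by omega)
                  rw [show i + (p - i) = p by omega] at this; exact this
                rw [z1 p hpspec.2] at h0
                have := hpspec.1
                rw [h0] at this
                exact absurd this (by decide)
              · omega
            have hle : l = (L - 1 - i) + (L - 1 - i) % 2 := by
              rw [hpi] at hα'
              omega
            rw [Nat.even_iff]; omega
          · -- i in 1-block
            rcases Nat.lt_or_ge (i + 1) (i + l + 1) with hlt | hge
            · have ht1 : z (i + 1) = 1 := z3 _ (by omega) (by omega)
              have ht0 : z (i + 1) = 0 := by
                have := h2 1 (by omega) (by omega)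
                rw [show i + 1 = i + 1 by omega] at this; exact this
              rw [ht0] at ht1; exact absurd ht1 (by decide)
            · have : l = 0 := by omega
              simp [this]
        · rcases lt_or_ge (i + l + 1) R with heR | heR
          · rw [z4 _ heM heR] at h3
            exact absurd h3 (by decide)
          · -- end in tail
            rw [z5 _ heR] at h3
            rcases lt_or_ge i M with hiM | hiM
            · have heq : i = M - 1 := by
                by_contra hc
                have ht1 : z (M - 1) = 1 := z3 _ (by omega) (by omega)
                have ht0 : z (M - 1) = 0 := by
                  have := h2 (M - 1 - i) (by omega) (by omega)
                  rw [show i + (M - 1 - i) = M - 1 by omega] at this; exact this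
                rw [ht0] at ht1; exact absurd ht1 (by decide)
              have hbz : ∀ j, j < i + l + 1 - R → b j = 0 := by
                intro j hj
                have := h2 (R + j - i) (by omega) (by omega)
                rw [show i + (R + j - i) = R + j by omega] at this
                rw [z5 (R + j) (by omega)] at this
                rw [show R + j - R = j by omega] at this
                exact this
              have hex : ∃ j, b j = 1 := ⟨i + l + 1 - R, h3⟩
              have hβ' : β = (Nat.find hex) % 2 := by rw [hβ, dif_pos hex]
              have hfind : Nat.find hex = i + l + 1 - R := by
                have hs := Nat.find_spec hex
                rcases lt_or_ge (Nat.find hex) (i + l + 1 - R) with hlt | hge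
                · rw [hbz _ hlt] at hs; exact absurd hs (by decide)
                · have := Nat.find_min' hex h3
                  omega
              rw [Nat.even_iff]
              omega
            · rcases lt_or_ge i R with hiR | hiR
              · rw [z4 i hiM hiR] at h1
                exact absurd h1 (by decide)
              · -- both in tail
                rw [z5 i hiR] at h1
                refine Hv (iv + (i - R)) l h1 ?_ ?_
                · intro j hj0 hjl
                  have := h2 j hj0 hjl
                  rw [z5 (i + j) (by omega)] at this
                  show xv (iv + (i - R) + j) = 0
                  rw [show iv + (i - R) + j = iv + (i + j - R) by omega]
                  exact this
                · show xv (iv + (i - R) + l + 1) = 1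
                  rw [show iv + (i - R) + l + 1 = iv + (i + l + 1 - R) by omega]
                  exact h3
  · -- u occurs at 0
    intro j
    have hj : (j : ℕ) < L := j.isLt
    show z (0 + (j : ℕ)) = u.get j
    rw [Nat.zero_add, z1 _ hj]
    have := hou j
    exact this
  · -- v occurs at L + n
    intro j
    show z (u.length + n + (j : ℕ)) = v.get j
    rw [z5 _ (by omega), show u.length + n + (j : ℕ) - R = (j : ℕ) by omega]
    exact hov j

/-- The chain determined by a direction sequence. -/
def chainOf {k : ℕ} (d : ℕ → Fin k) : ℕ → Word k := fun j => (List.range j).map d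

lemma chainOf_succ {k : ℕ} (d : ℕ → Fin k) (j : ℕ) :
    chainOf d (j + 1) = chainOf d j ++ [d j] := by
  simp [chainOf, List.range_succ]

lemma isChain_chainOf {k : ℕ} (d : ℕ → Fin k) : IsChain (chainOf d) :=
  ⟨by simp [chainOf], fun n => ⟨d n, chainOf_succ d n⟩⟩

lemma chain_length {k : ℕ} {c : ℕ → Word k} (hc : IsChain c) : ∀ j, (c j).length = j := by
  intro j
  induction j with
  | zero => simp [hc.1]
  | succ j ih =>
      obtain ⟨i, hi⟩ := hc.2 j
      simp [hi, ih]

lemma chainOf_eq_take {k : ℕ} (d : ℕ → Fin k) (w : Word k)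
    (hd : ∀ j (hj : j < w.length), d j = w.get ⟨j, hj⟩) :
    ∀ j, j ≤ w.length → chainOf d j = w.take j := by
  intro j
  induction j with
  | zero => simp [chainOf]
  | succ j ih =>
      intro hj
      rw [chainOf_succ, ih (by omega), hd j (by omega)]
      rw [List.take_succ]
      congr 1
      rw [List.getElem?_eq_getElem (by omega)]
      simp

/-- Parity contradiction at a node labeled per the pattern `v`. -/
lemma parity_contra {k' : ℕ} (t : Word (k' + 2) → Fin 2)
    (ht : t ∈ homTree (k' + 2) evenShift) (w : Word (k' + 2)) (hw : 0 < w.length)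
    (h0 : t [] = 1) (hw0 : t w = 0)
    (hc0 : t (w ++ [0]) = 1) (hc1 : t (w ++ [1]) = 0)
    (hc10 : t (w ++ [1, 0]) = 1) : False := by
  classical
  set L := w.length with hL
  set P : ℕ → Prop := fun j => t (w.take j) = 1 with hP
  have hP0 : P 0 := by simpa [hP] using h0
  set p := Nat.findGreatest P L with hp
  have hple : p ≤ L := Nat.findGreatest_le L
  have hpspec : P p := by
    have := Nat.findGreatest_spec (P := P) (m := 0) (n := L) (Nat.zero_le _) hP0
    rw [← hp] at this; exact this
  have hfin2 : ∀ c : Fin 2, ¬ c = 1 → c = 0 := by decide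
  have hmax : ∀ j, p < j → j ≤ L → t (w.take j) = 0 := by
    intro j hj1 hj2
    refine hfin2 _ ?_
    have := Nat.findGreatest_is_greatest (P := P) (n := L) (k := j) (by omega) hj2
    exact this
  have hplt : p < L := by
    rcases Nat.lt_or_ge p L with h | h
    · exact h
    · exfalso
      have hpL : p = L := by omega
      have h' : t (w.take L) = 1 := by rw [← hpL]; exact hpspec
      rw [hL, List.take_length, hw0] at h'
      exact absurd h' (by decide)
  -- chain through child 0
  set d0 : ℕ → Fin (k' + 2) := fun j => if hj : j < L then w.get ⟨j, hj⟩ else 0 with hd0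
  set d1 : ℕ → Fin (k' + 2) := fun j =>
    if hj : j < L then w.get ⟨j, hj⟩ else if j = L then 1 else 0 with hd1
  have hd0t : ∀ j, j ≤ L → chainOf d0 j = w.take j :=
    chainOf_eq_take d0 w (fun j hj => by rw [hd0]; simp [hj, hL])
  have hd1t : ∀ j, j ≤ L → chainOf d1 j = w.take j :=
    chainOf_eq_take d1 w (fun j hj => by rw [hd1]; simp [hj, hL])
  have hc0L1 : chainOf d0 (L + 1) = w ++ [0] := by
    rw [chainOf_succ, hd0t L le_rfl]
    simp [hd0, hL]
  have hc1L1 : chainOf d1 (L + 1) = w ++ [1] := by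
    rw [chainOf_succ, hd1t L le_rfl]
    simp [hd1, hL]
  have hc1L2 : chainOf d1 (L + 2) = w ++ [1, 0] := by
    rw [show L + 2 = (L + 1) + 1 from rfl, chainOf_succ, hc1L1]
    rw [hd1]
    simp
  have H0 := (mem_evenShift_iff _).mp (ht (chainOf d0) (isChain_chainOf d0))
  have H1 := (mem_evenShift_iff _).mp (ht (chainOf d1) (isChain_chainOf d1))
  have hE0 : Even (L - p) := by
    refine H0 p (L - p) ?_ ?_ ?_
    · show t (chainOf d0 p) = 1
      rw [hd0t p (by omega)]
      exact hpspec
    · intro j hj0 hjl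
      show t (chainOf d0 (p + j)) = 0
      rw [hd0t (p + j) (by omega)]
      exact hmax (p + j) (by omega) (by omega)
    · show t (chainOf d0 (p + (L - p) + 1)) = 1
      rw [show p + (L - p) + 1 = L + 1 by omega, hc0L1]
      exact hc0
  have hE1 : Even (L + 1 - p) := by
    refine H1 p (L + 1 - p) ?_ ?_ ?_
    · show t (chainOf d1 p) = 1
      rw [hd1t p (by omega)]
      exact hpspec
    · intro j hj0 hjl
      show t (chainOf d1 (p + j)) = 0
      rcases Nat.lt_or_ge (p + j) (L + 1) with h | h
      · rw [hd1t (p + j) (by omega)]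
        exact hmax (p + j) (by omega) (by omega)
      · have : p + j = L + 1 := by omega
        rw [this, hc1L1]
        exact hc1
    · show t (chainOf d1 (p + (L + 1 - p) + 1)) = 1
      rw [show p + (L + 1 - p) + 1 = L + 2 by omega, hc1L2]
      exact hc10
  rw [Nat.even_iff] at hE0 hE1
  omega

def ufun (k' : ℕ) : Word (k' + 2) → Fin 2 := fun w => if w = [] then 1 else 0
def vfun (k' : ℕ) : Word (k' + 2) → Fin 2 := fun w => if w = [0] ∨ w = [1, 0] then 1 else 0

lemma ufun_adm (k' : ℕ) : AdmissibleBlock (homTree (k' + 2) evenShift) 0 (ufun k') := by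
  refine ⟨ufun k', ?_, [], fun w hw => by simp⟩
  intro c hc
  rw [mem_evenShift_iff]
  intro i l h1 h2 h3
  exfalso
  obtain ⟨i', hi'⟩ := hc.2 (i + l)
  simp only [ufun] at h3
  rw [hi'] at h3
  simp at h3

lemma vfun_adm (k' : ℕ) : AdmissibleBlock (homTree (k' + 2) evenShift) 2 (vfun k') := by
  refine ⟨vfun k', ?_, [], fun w hw => by simp⟩
  intro c hc
  rw [mem_evenShift_iff]
  intro i l h1 h2 h3
  have key : ∀ j : ℕ, vfun k' (c j) = 1 → j = 1 ∨ j = 2 := by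
    intro j hj
    simp only [vfun] at hj
    by_cases h : c j = [0] ∨ c j = [1, 0]
    · rcases h with h | h
      · left
        have := congrArg List.length h
        rw [chain_length hc] at this
        simpa using this
      · right
        have := congrArg List.length h
        rw [chain_length hc] at this
        simpa using this
    · rw [if_neg h] at hj
      exact absurd hj (by decide)
  have k1 := key i h1
  have k2 := key (i + l + 1) h3
  have : l = 0 := by omega
  simp [this]

lemma not_IR (k' : ℕ) : ¬ IR (homTree (k' + 2) evenShift) := by
  intro h
  obtain ⟨w, hw, t, htT, ht1, ht2⟩ := h 0 2 (ufun k') (vfun k') (ufun_adm k') (vfun_adm k')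
  refine parity_contra t htT w hw ?_ ?_ ?_ ?_ ?_
  · have := ht1 [] (by simp)
    rw [this]; simp [ufun]
  · have := ht2 [] (by simp)
    rw [List.append_nil] at this
    rw [this]; simp [vfun]
  · have := ht2 [0] (by simp)
    rw [this]; simp [vfun]
  · have := ht2 [1] (by simp)
    rw [this]; simp [vfun, Fin.ext_iff]
  · have := ht2 [1, 0] (by simp)
    rw [this]; simp [vfun]

lemma not_CPCIR (k' : ℕ) : ¬ CPCIR (homTree (k' + 2) evenShift) := by
  intro h
  obtain ⟨P, hP, hPlen, t, htT, ht1, ht2⟩ :=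
    h 0 2 (ufun k') (vfun k') (ufun_adm k') (vfun_adm k')
  obtain ⟨w, hwP⟩ : ∃ w, w ∈ P := by
    by_contra hc
    push_neg at hc
    obtain ⟨x, hx, _⟩ := hP.2.2 [] (fun z hz => absurd hz (hc z))
    exact hc x hx
  have hw : 0 < w.length := by have := hPlen w hwP; omega
  refine parity_contra t htT w hw ?_ ?_ ?_ ?_ ?_
  · have := ht1 [] (by simp)
    rw [this]; simp [ufun]
  · have := ht2 w hwP [] (by simp)
    rw [List.append_nil] at this
    rw [this]; simp [vfun]
  · have := ht2 w hwP [0] (by simp)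
    rw [this]; simp [vfun]
  · have := ht2 w hwP [1] (by simp)
    rw [this]; simp [vfun, Fin.ext_iff]
  · have := ht2 w hwP [1, 0] (by simp)
    rw [this]; simp [vfun]


/-- The even shift is topologically mixing, but its hom tree-shift is not
CPC-irreducible (hence not irreducible). -/
theorem stmt19 {k : ℕ} (hk : 2 ≤ k) :
    MixingShift evenShift ∧
    ¬ CPCIR (homTree k evenShift) ∧ ¬ IR (homTree k evenShift) := by
  obtain ⟨k', rfl⟩ : ∃ k', k = k' + 2 := ⟨k - 2, by omega⟩
  exact ⟨evenShift_mixing, not_CPCIR k', not_IR k'⟩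

end TreeShiftPaper
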